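/- As β̄ → ∞, the largest endemic equilibrium p*(β̄) of the actSIS risk-tolerator model satisfies p*(β̄) − (1 − δ/β̄) → 0; equivalently, the actSIS endemic equilibrium approaches the SIS endemic equilibrium. -/
import Mathlib


/-- As β̄ → ∞, the largest endemic equilibrium of the actSIS risk-tolerator
model approaches the SIS endemic equilibrium 1 − δ/β̄. -/
theorem actSIS_tolerator_EE_limit (δ βc : ℝ) (hδ : 0 < δ) (hβc : 0 < βc)
    (φT : ℝ → ℝ)
    (hcont : ContinuousOn φT (Set.Icc 0 1))
    (hmono : StrictMonoOn φT (Set.Icc 0 1))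
    (hφ0 : φT 0 = 0)
    (hφ1 : Filter.Tendsto φT (nhdsWithin 1 (Set.Iio 1)) (nhds 1))
    (pstar : ℝ → ℝ)
    (hEE : ∀ β : ℝ, βc < β → pstar β ∈ Set.Ioo (0 : ℝ) 1 ∧
      φT (pstar β) * (1 - pstar β) = δ / β)
    (hlargest : ∀ β : ℝ, βc < β → ∀ q ∈ Set.Ioo (0 : ℝ) 1,
      φT q * (1 - q) = δ / β → q ≤ pstar β) :
    Filter.Tendsto (fun β => pstar β - (1 - δ / β)) Filter.atTop (nhds 0) := by
  have hp1 : Filter.Tendsto pstar Filter.atTop (nhds 1) := by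
    rw [Metric.tendsto_atTop]
    intro ε hε
    set ε' := min ε 1 with hε'def
    have hε'pos : 0 < ε' := lt_min hε one_pos
    have hε'le1 : ε' ≤ 1 := min_le_right _ _
    set a : ℝ := 1 - ε' / 2 with ha
    have ha0 : 0 < a := by simp only [ha]; linarith
    have ha1 : a < 1 := by simp only [ha]; linarith
    have haI : a ∈ Set.Icc (0:ℝ) 1 := ⟨le_of_lt ha0, le_of_lt ha1⟩
    have h0I : (0:ℝ) ∈ Set.Icc (0:ℝ) 1 := ⟨le_refl _, zero_le_one⟩
    have hφa : 0 < φT a := by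
      have := hmono h0I haI ha0
      rwa [hφ0] at this
    set c : ℝ := φT a * (ε' / 2) with hc
    have hcpos : 0 < c := mul_pos hφa (by linarith)
    set N : ℝ := max βc (δ / c) + 1 with hN
    refine ⟨N, fun β hβ => ?_⟩
    have hβc' : βc < β := lt_of_lt_of_le (by simp [hN]; nlinarith [le_max_left βc (δ/c)]) hβ
    have hβpos : 0 < β := lt_trans hβc hβc'
    have hδβpos : 0 < δ / β := div_pos hδ hβpos
    have hδβc : δ / β < c := by
      have h1 : δ / c < β := lt_of_lt_of_le (by nlinarith [le_max_right βc (δ/c)]) hβ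
      rw [div_lt_iff₀ hβpos]
      rw [div_lt_iff₀ hcpos] at h1
      nlinarith
    -- IVT on [a, 1] for f p = φT p * (1 - p)
    set f : ℝ → ℝ := fun p => φT p * (1 - p) with hf
    have hfcont : ContinuousOn f (Set.Icc a 1) := by
      apply ContinuousOn.mul
      · exact hcont.mono (Set.Icc_subset_Icc (le_of_lt ha0) le_rfl)
      · exact (continuous_const.sub continuous_id).continuousOn
    have hmem : δ / β ∈ Set.Icc (f 1) (f a) := by
      constructor
      · simp [hf]; exact le_of_lt hδβpos
      · have : f a = c := by simp [hf, hc, ha]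
        rw [this]; exact le_of_lt hδβc
    obtain ⟨q, hqmem, hqeq⟩ := intermediate_value_Icc' (le_of_lt ha1) hfcont hmem
    have hq1 : q < 1 := by
      rcases lt_or_eq_of_le hqmem.2 with h | h
      · exact h
      · exfalso; rw [h] at hqeq; simp [hf] at hqeq; linarith
    have hq0 : 0 < q := lt_of_lt_of_le ha0 hqmem.1
    have hle : q ≤ pstar β := hlargest β hβc' q ⟨hq0, hq1⟩ hqeq
    obtain ⟨⟨hp0, hplt1⟩, _⟩ := hEE β hβc'
    have h1 : 1 - pstar β ≤ ε' / 2 := by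
      have : a ≤ pstar β := le_trans hqmem.1 hle
      simp only [ha] at this; linarith
    rw [Real.dist_eq, abs_lt]
    constructor <;> [skip; skip] <;>
      (first
        | (have : ε' ≤ ε := min_le_left _ _; linarith)
        | linarith)
  have hδβ : Filter.Tendsto (fun β : ℝ => δ / β) Filter.atTop (nhds 0) :=
    Filter.Tendsto.div_atTop tendsto_const_nhds Filter.tendsto_id
  have h2 : Filter.Tendsto (fun β : ℝ => (pstar β - 1) + δ / β) Filter.atTop
      (nhds (1 - 1 + 0)) :=
    (hp1.sub (tendsto_const_nhds : Filter.Tendsto (fun _ : ℝ => (1:ℝ)) _ _)).add hδβ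
  simp only [sub_self, zero_add] at h2
  convert h2 using 2 with β
  ring
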